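/- arXiv:1803.10743 — 2 statements merged into one kernel-verified Lean document; each statement's English description precedes it below -/
import Mathlib

section
/- Let G be a finite group, H₂ ≤ G with representation (ρ₂, V₂), and K : G → Hom(V₁,V₂). The cross-correlation [K★f](g) = Σ_{g'∈G} K(g⁻¹g') f(g') satisfies the Mackey condition [K★f](gh₂) = ρ₂(h₂⁻¹)[K★f](g) for all f : G → V₁, g ∈ G, h₂ ∈ H₂, if and only if K(h₂ g) = ρ₂(h₂) K(g) for all h₂ ∈ H₂, g ∈ G. -/
open Finset

/-- the cross-correlation `[K★f](g) = Σ_{g'} K(g⁻¹g') f(g')` satisfies the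
Mackey condition `[K★f](gh₂) = ρ₂(h₂⁻¹)[K★f](g)` for all `f`, `g`, `h₂ ∈ H₂`, iff
`K(h₂g) = ρ₂(h₂) K(g)` for all `h₂ ∈ H₂`, `g ∈ G`. -/
theorem stmt15 {k G V₁ V₂ : Type*} [Field k] [Group G] [Fintype G]
    [AddCommGroup V₁] [Module k V₁] [AddCommGroup V₂] [Module k V₂]
    (H₂ : Subgroup G) (ρ₂ : Representation k H₂ V₂)
    (K : G → (V₁ →ₗ[k] V₂)) :
    (∀ (f : G → V₁) (g : G) (h₂ : H₂),
        ∑ g' : G, K ((g * (h₂ : G))⁻¹ * g') (f g')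
          = ρ₂ h₂⁻¹ (∑ g' : G, K (g⁻¹ * g') (f g')))
    ↔ (∀ (h₂ : H₂) (g : G), K ((h₂ : G) * g) = (ρ₂ h₂) ∘ₗ K g) := by
  classical
  constructor
  · intro h h₂ g
    ext v
    have := h (Pi.single g v) 1 h₂⁻¹
    simp only [one_mul, inv_one, inv_inv, Pi.single_apply, apply_ite, map_zero,
      Finset.sum_ite_eq', Finset.mem_univ, if_true] at this
    simpa using this
  · intro h f g h₂
    rw [map_sum]
    refine Finset.sum_congr rfl fun g' _ => ?_
    have : (g * (h₂ : G))⁻¹ * g' = (↑h₂⁻¹ : G) * (g⁻¹ * g') := by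
      simp [mul_assoc]
    rw [this, h h₂⁻¹ (g⁻¹ * g')]
    simp
end

section
/- Let K_G = {κ : G → Hom(V₁,V₂) | κ(h₂ g h₁) = ρ₂(h₂) κ(g) ρ₁(h₁) for all h₁ ∈ H₁, h₂ ∈ H₂, g ∈ G} and K_C = {κ̄ : G/H₁ → Hom(V₁,V₂) | κ̄(h₂ x) = ρ₂(h₂) κ̄(x) ρ₁(h₁(x,h₂))⁻¹ for all h₂ ∈ H₂, x ∈ G/H₁}, where h₁(x,g) = s₁(gx)⁻¹ g s₁(x). Then the maps [Λ_K κ̄](g) = κ̄(gH₁) ρ₁(h₁(g)) and [Λ_K⁻¹ κ](x) = κ(s₁(x)) are mutually inverse linear bijections between K_C and K_G. -/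
/-- The `H₁`-valued cocycle `h₁(x,g) = s₁(gx)⁻¹ g s₁(x)` associated to a section `s₁`. -/
def cocycle {G : Type*} [Group G] {H₁ : Subgroup G} (s₁ : G ⧸ H₁ → G)
    (hmem : ∀ (x : G ⧸ H₁) (g : G), (s₁ (g • x))⁻¹ * g * s₁ x ∈ H₁)
    (x : G ⧸ H₁) (g : G) : H₁ :=
  ⟨(s₁ (g • x))⁻¹ * g * s₁ x, hmem x g⟩

/-- The space `K_G` of bi-equivariant kernels `κ : G → Hom(V₁,V₂)`,
`κ(h₂ g h₁) = ρ₂(h₂) κ(g) ρ₁(h₁)`. -/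
def KGspace {k G V₁ V₂ : Type*} [Field k] [Group G]
    [AddCommGroup V₁] [Module k V₁] [AddCommGroup V₂] [Module k V₂]
    {H₁ H₂ : Subgroup G}
    (ρ₁ : Representation k H₁ V₁) (ρ₂ : Representation k H₂ V₂) :
    Set (G → (V₁ →ₗ[k] V₂)) :=
  {κ | ∀ (h₁ : H₁) (h₂ : H₂) (g : G),
    κ ((h₂ : G) * g * (h₁ : G)) = (ρ₂ h₂) ∘ₗ κ g ∘ₗ (ρ₁ h₁)}

/-- The space `K_C` of left-equivariant kernels `κ̄ : G/H₁ → Hom(V₁,V₂)`,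
`κ̄(h₂ x) = ρ₂(h₂) κ̄(x) ρ₁(h₁(x,h₂))⁻¹`. -/
def KCspace {k G V₁ V₂ : Type*} [Field k] [Group G]
    [AddCommGroup V₁] [Module k V₁] [AddCommGroup V₂] [Module k V₂]
    {H₁ H₂ : Subgroup G}
    (ρ₁ : Representation k H₁ V₁) (ρ₂ : Representation k H₂ V₂)
    (s₁ : G ⧸ H₁ → G)
    (hmem : ∀ (x : G ⧸ H₁) (g : G), (s₁ (g • x))⁻¹ * g * s₁ x ∈ H₁) :
    Set ((G ⧸ H₁) → (V₁ →ₗ[k] V₂)) :=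
  {κ | ∀ (h₂ : H₂) (x : G ⧸ H₁),
    κ ((h₂ : G) • x) = (ρ₂ h₂) ∘ₗ κ x ∘ₗ (ρ₁ (cocycle s₁ hmem x (h₂ : G))⁻¹)}

/-- The map `[Λ_K κ̄](g) = κ̄(gH₁) ρ₁(h₁(g))`, where `h₁(g) = h₁(H₁, g)`. -/
def LamK {k G V₁ V₂ : Type*} [Field k] [Group G]
    [AddCommGroup V₁] [Module k V₁] [AddCommGroup V₂] [Module k V₂]
    {H₁ : Subgroup G} (ρ₁ : Representation k H₁ V₁)
    (s₁ : G ⧸ H₁ → G)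
    (hmem : ∀ (x : G ⧸ H₁) (g : G), (s₁ (g • x))⁻¹ * g * s₁ x ∈ H₁)
    (κ : (G ⧸ H₁) → (V₁ →ₗ[k] V₂)) : G → (V₁ →ₗ[k] V₂) :=
  fun g => (κ (QuotientGroup.mk g)) ∘ₗ (ρ₁ (cocycle s₁ hmem (QuotientGroup.mk 1) g))

/-- The map `[Λ_K⁻¹ κ](x) = κ(s₁(x))`. -/
def LamKinv {k G V₁ V₂ : Type*} [Field k] [Group G]
    [AddCommGroup V₁] [Module k V₁] [AddCommGroup V₂] [Module k V₂]
    {H₁ : Subgroup G} (s₁ : G ⧸ H₁ → G)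
    (κ : G → (V₁ →ₗ[k] V₂)) : (G ⧸ H₁) → (V₁ →ₗ[k] V₂) :=
  fun x => κ (s₁ x)

/-- `Λ_K` and `Λ_K⁻¹` are mutually inverse linear bijections between the
spaces `K_C` and `K_G`. -/
theorem stmt17 {k G V₁ V₂ : Type*} [Field k] [Group G]
    [AddCommGroup V₁] [Module k V₁] [AddCommGroup V₂] [Module k V₂]
    (H₁ H₂ : Subgroup G)
    (ρ₁ : Representation k H₁ V₁) (ρ₂ : Representation k H₂ V₂)
    (s₁ : G ⧸ H₁ → G)
    (hs : ∀ x : G ⧸ H₁, QuotientGroup.mk (s₁ x) = x)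
    (hse : s₁ (QuotientGroup.mk 1) = 1)
    (hmem : ∀ (x : G ⧸ H₁) (g : G), (s₁ (g • x))⁻¹ * g * s₁ x ∈ H₁) :
    (∀ κ ∈ KCspace ρ₁ ρ₂ s₁ hmem, LamK ρ₁ s₁ hmem κ ∈ KGspace ρ₁ ρ₂)
    ∧ (∀ κ ∈ KGspace ρ₁ ρ₂, LamKinv s₁ κ ∈ KCspace ρ₁ ρ₂ s₁ hmem)
    ∧ (∀ κ : (G ⧸ H₁) → (V₁ →ₗ[k] V₂), LamKinv s₁ (LamK ρ₁ s₁ hmem κ) = κ)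
    ∧ (∀ κ ∈ KGspace ρ₁ ρ₂, LamK ρ₁ s₁ hmem (LamKinv s₁ κ) = κ)
    ∧ (∀ κ κ' : (G ⧸ H₁) → (V₁ →ₗ[k] V₂),
        LamK ρ₁ s₁ hmem (κ + κ') = LamK ρ₁ s₁ hmem κ + LamK ρ₁ s₁ hmem κ')
    ∧ (∀ (c : k) (κ : (G ⧸ H₁) → (V₁ →ₗ[k] V₂)),
        LamK ρ₁ s₁ hmem (c • κ) = c • LamK ρ₁ s₁ hmem κ) := by
  have e1 : ∀ a : G, a • ((QuotientGroup.mk 1 : G ⧸ H₁)) = QuotientGroup.mk a := by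
    intro a
    show QuotientGroup.mk (a * 1) = _
    rw [mul_one]
  have comp_rho : ∀ a b : H₁, ρ₁ a ∘ₗ ρ₁ b = ρ₁ (a * b) := fun a b =>
    ((map_mul ρ₁ a b).trans (Module.End.mul_eq_comp _ _)).symm
  refine ⟨?_, ?_, ?_, ?_, ?_, ?_⟩
  · intro κ hκ h₁ h₂ g
    have hq : (QuotientGroup.mk ((h₂ : G) * g * (h₁ : G)) : G ⧸ H₁)
        = (h₂ : G) • (QuotientGroup.mk g) := QuotientGroup.mk_mul_of_mem _ h₁.2
    show κ _ ∘ₗ ρ₁ _ = _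
    rw [hq, hκ h₂ (QuotientGroup.mk g)]
    simp only [LamK]
    simp only [LinearMap.comp_assoc]
    rw [comp_rho, comp_rho]
    congr 2
    refine congrArg (fun t => ρ₁ t) (Subtype.ext ?_)
    push_cast [cocycle, e1, hq, hse]
    group
  · intro κ hκ h₂ x
    set c := cocycle s₁ hmem x (h₂ : G) with hc
    have hg : (h₂ : G) * s₁ x * ((c⁻¹ : H₁) : G) = s₁ ((h₂ : G) • x) := by
      push_cast [hc, cocycle]
      group
    show κ (s₁ ((h₂ : G) • x)) = _
    rw [← hg, hκ c⁻¹ h₂ (s₁ x)]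
    rfl
  · intro κ
    funext x
    show κ (QuotientGroup.mk (s₁ x)) ∘ₗ ρ₁ _ = κ x
    have h1 : cocycle s₁ hmem (QuotientGroup.mk 1) (s₁ x) = 1 := by
      apply Subtype.ext
      push_cast [cocycle, e1, hse, hs]
      group
    rw [hs x, h1, map_one]
    exact LinearMap.comp_id _
  · intro κ hκ
    funext g
    show κ (s₁ (QuotientGroup.mk g)) ∘ₗ ρ₁ _ = κ g
    set c := cocycle s₁ hmem (QuotientGroup.mk 1) g with hc
    have hg : (1 : G) * s₁ (QuotientGroup.mk g) * (c : G) = g := by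
      push_cast [hc, cocycle, e1, hse]
      group
    have := hκ c 1 (s₁ (QuotientGroup.mk g))
    rw [OneMemClass.coe_one, hg] at this
    rw [this, map_one]
    rfl
  · intro κ κ'
    funext g
    show (κ _ + κ' _) ∘ₗ ρ₁ _ = _
    rw [LinearMap.add_comp]
    rfl
  · intro c κ
    funext g
    show (c • κ _) ∘ₗ ρ₁ _ = _
    rw [LinearMap.smul_comp]
    rfl
end
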